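/- Let d > 1 be an odd integer and n ≥ 2. Let V = Z_d^n × Z_d^n with symplectic form [·,·]. Any function λ : V → Z_d satisfying λ(u+v) = λ(u) + λ(v) for all u, v with [u,v] = 0 is a group homomorphism (i.e., is additive on all of V). -/

import Mathlib

open Complex Matrix BigOperators Finset

noncomputable section

/-- ω = e^{2πi/d} -/
def omeg (d : ℕ) : ℂ := Complex.exp (2 * Real.pi * Complex.I / d)

/-- ω raised to a `ZMod d` exponent. -/
def wpow (d : ℕ) [NeZero d] (x : ZMod d) : ℂ := omeg d ^ x.val

/-- standard inner product on `(ZMod d)^n` -/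
def ip {d n : ℕ} (a b : Fin n → ZMod d) : ZMod d := ∑ i, a i * b i

/-- the phase space `V = Z_d^n × Z_d^n` -/
abbrev PS (d n : ℕ) := (Fin n → ZMod d) × (Fin n → ZMod d)

/-- symplectic form `[u,v] = (u_Z|v_X) − (u_X|v_Z)` -/
def symp {d n : ℕ} (u v : PS d n) : ZMod d := ip u.1 v.2 - ip u.2 v.1

/-- `Z^a = Z^{a_1} ⊗ ⋯ ⊗ Z^{a_n}` : diagonal matrix with entries `ω^{(a|k)}` -/
def Zop (d n : ℕ) [NeZero d] (a : Fin n → ZMod d) :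
    Matrix (Fin n → ZMod d) (Fin n → ZMod d) ℂ :=
  Matrix.of fun k l => if k = l then wpow d (ip a k) else 0

/-- `X^a = X^{a_1} ⊗ ⋯ ⊗ X^{a_n}` : shift matrix `|l⟩ ↦ |l + a⟩` -/
def Xop (d n : ℕ) [NeZero d] (a : Fin n → ZMod d) :
    Matrix (Fin n → ZMod d) (Fin n → ZMod d) ℂ :=
  Matrix.of fun k l => if k = l + a then 1 else 0

/-- Heisenberg–Weyl operator `T_u = ω^{-(u_Z|u_X)/2} Z^{u_Z} X^{u_X}` -/
def HW (d n : ℕ) [NeZero d] (u : PS d n) :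
    Matrix (Fin n → ZMod d) (Fin n → ZMod d) ℂ :=
  wpow d (-((2 : ZMod d)⁻¹ * ip u.1 u.2)) • (Zop d n u.1 * Xop d n u.2)

/-- phase-point operator `A_u = d^{-n} Σ_v ω^{[u,v]} T_v` -/
def phasePoint (d n : ℕ) [NeZero d] (u : PS d n) :
    Matrix (Fin n → ZMod d) (Fin n → ZMod d) ℂ :=
  ((d : ℂ) ^ n)⁻¹ • ∑ v : PS d n, wpow d (symp u v) • HW d n v

/-- spectral projector `Π_u^s = (1/d) Σ_k ω^{-ks} T_u^k` -/
def specProj (d n : ℕ) [NeZero d] (a : PS d n) (s : ZMod d) :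
    Matrix (Fin n → ZMod d) (Fin n → ZMod d) ℂ :=
  (d : ℂ)⁻¹ • ∑ k : ZMod d, wpow d (-(k * s)) • (HW d n a) ^ (k.val)


section Aux

variable {d n : ℕ} [NeZero d]

lemma ip_comm (a b : Fin n → ZMod d) : ip a b = ip b a :=
  Finset.sum_congr rfl (fun i _ => mul_comm _ _)

lemma ip_add_right (a b c : Fin n → ZMod d) : ip a (b + c) = ip a b + ip a c := by
  unfold ip
  rw [← Finset.sum_add_distrib]
  exact Finset.sum_congr rfl (fun i _ => by simp [mul_add])

lemma ip_add_left (a b c : Fin n → ZMod d) : ip (a + b) c = ip a c + ip b c := by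
  rw [ip_comm, ip_add_right, ip_comm c a, ip_comm c b]

lemma ip_neg_right (a b : Fin n → ZMod d) : ip a (-b) = - ip a b := by
  unfold ip
  rw [← Finset.sum_neg_distrib]
  exact Finset.sum_congr rfl (fun i _ => by simp)

lemma ip_neg_left (a b : Fin n → ZMod d) : ip (-a) b = - ip a b := by
  rw [ip_comm, ip_neg_right, ip_comm]

lemma symp_add_left (u v w : PS d n) : symp (u + v) w = symp u w + symp v w := by
  unfold symp
  rw [Prod.fst_add, Prod.snd_add, ip_add_left, ip_add_left]
  ring

lemma symp_add_right (u v w : PS d n) : symp u (v + w) = symp u v + symp u w := by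
  unfold symp
  rw [Prod.fst_add, Prod.snd_add, ip_add_right, ip_add_right]
  ring

lemma symp_neg_left (u v : PS d n) : symp (-u) v = - symp u v := by
  unfold symp
  rw [Prod.fst_neg, Prod.snd_neg, ip_neg_left, ip_neg_left]
  ring

lemma symp_neg_right (u v : PS d n) : symp u (-v) = - symp u v := by
  unfold symp
  rw [Prod.fst_neg, Prod.snd_neg, ip_neg_right, ip_neg_right]
  ring

lemma symp_self (u : PS d n) : symp u u = 0 := by
  unfold symp
  rw [ip_comm]
  ring

lemma symp_anti (u v : PS d n) : symp u v = - symp v u := by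
  unfold symp
  rw [ip_comm u.1 v.2, ip_comm u.2 v.1]
  ring

lemma symp_zero_right (u : PS d n) : symp u 0 = 0 := by
  unfold symp ip
  simp

/-- `x` is supported on mode `i` -/
def onMode (i : Fin n) (x : PS d n) : Prop :=
  ∀ j, j ≠ i → x.1 j = 0 ∧ x.2 j = 0

lemma symp_onMode_eq_zero {i j : Fin n} (hij : i ≠ j) {x y : PS d n}
    (hx : onMode i x) (hy : onMode j y) : symp x y = 0 := by
  have h1 : ip x.1 y.2 = 0 := by
    refine Finset.sum_eq_zero (fun k _ => ?_)
    rcases Decidable.eq_or_ne k i with h | h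
    · have : y.2 k = 0 := (hy k (by rw [h]; exact hij)).2
      rw [this, mul_zero]
    · have : x.1 k = 0 := (hx k h).1
      rw [this, zero_mul]
  have h2 : ip x.2 y.1 = 0 := by
    refine Finset.sum_eq_zero (fun k _ => ?_)
    rcases Decidable.eq_or_ne k i with h | h
    · have : y.1 k = 0 := (hy k (by rw [h]; exact hij)).1
      rw [this, mul_zero]
    · have : x.2 k = 0 := (hx k h).2
      rw [this, zero_mul]
  unfold symp
  rw [h1, h2, sub_zero]

/-- the single-mode component of a phase-space vector -/
def mpart (i : Fin n) (u : PS d n) : PS d n :=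
  (fun k => if k = i then u.1 k else 0, fun k => if k = i then u.2 k else 0)

lemma mpart_onMode (i : Fin n) (u : PS d n) : onMode i (mpart i u) := by
  intro j hj
  constructor <;> simp [mpart, hj]

lemma mpart_add (i : Fin n) (u v : PS d n) :
    mpart i (u + v) = mpart i u + mpart i v := by
  unfold mpart
  apply Prod.ext <;> funext k <;> by_cases h : k = i <;> simp [h]

lemma sum_mpart (u : PS d n) : ∑ i, mpart i u = u := by
  apply Prod.ext
  · rw [Prod.fst_sum]
    funext k
    rw [Finset.sum_apply]
    simp [mpart]
  · rw [Prod.snd_sum]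
    funext k
    rw [Finset.sum_apply]
    simp [mpart]

lemma symp_sum_right (u : PS d n) (s : Finset (Fin n)) (g : Fin n → PS d n) :
    symp u (∑ i ∈ s, g i) = ∑ i ∈ s, symp u (g i) := by
  induction s using Finset.induction with
  | empty => simp [symp_zero_right]
  | @insert _ _ hns ih =>
      rw [Finset.sum_insert hns, Finset.sum_insert hns, symp_add_right, ih]

end Aux

theorem stmt7 (d n : ℕ) [NeZero d] (hd : Odd d) (hd1 : 1 < d) (hn : 2 ≤ n)
    (lam : PS d n → ZMod d)
    (hadd : ∀ u v : PS d n, symp u v = 0 → lam (u + v) = lam u + lam v) :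
    ∀ u v : PS d n, lam (u + v) = lam u + lam v := by
  classical
  -- 2 is a unit in `ZMod d`
  have h2 : IsUnit (2 : ZMod d) := by
    have hco : Nat.Coprime 2 d := by
      rw [Nat.Prime.coprime_iff_not_dvd Nat.prime_two]
      exact (Nat.not_even_iff_odd.mpr hd) ∘ (even_iff_two_dvd).mpr
    have := (ZMod.isUnit_iff_coprime 2 d).mpr hco
    simpa using this
  have lam0 : lam 0 = 0 := by
    have h := hadd 0 0 (by rw [symp_zero_right])
    rw [add_zero] at h
    exact (left_eq_add.mp h)
  have lamneg : ∀ z : PS d n, lam (-z) = - lam z := by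
    intro z
    have h := hadd z (-z) (by rw [symp_neg_right, symp_self, neg_zero])
    rw [add_neg_cancel, lam0] at h
    linear_combination -h
  -- the rectangle lemma
  have key : ∀ x y w w' : PS d n, symp x w = 0 → symp x w' = 0 → symp y w = 0 →
      symp y w' = 0 → symp x y + symp w w' = 0 →
      lam (x + y) + lam (w + w') = lam x + lam y + lam w + lam w' := by
    intro x y w w' hxw hxw' hyw hyw' hs
    have h1 := hadd x w hxw
    have h2 := hadd y w' hyw'
    have h3 := hadd (x + y) (w + w') (by
      rw [symp_add_left, symp_add_right, symp_add_right, hxw, hxw', hyw, hyw']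
      ring)
    have h4 := hadd (x + w) (y + w') (by
      rw [symp_add_left, symp_add_right, symp_add_right, hxw']
      have hwy : symp w y = 0 := by rw [symp_anti, hyw, neg_zero]
      rw [hwy]
      linear_combination hs)
    have e : (x + w) + (y + w') = (x + y) + (w + w') := by abel
    rw [e, h3, h1, h2] at h4
    linear_combination h4
  -- additivity for vectors supported on a common single mode
  have single : ∀ (i : Fin n) (x y : PS d n), onMode i x → onMode i y →
      lam (x + y) = lam x + lam y := by
    intro i x y hx hy
    obtain ⟨j, hj⟩ : ∃ j : Fin n, j ≠ i := by
      rcases Decidable.eq_or_ne i ⟨0, by omega⟩ with h | h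
      · exact ⟨⟨1, by omega⟩, by rw [h]; simp [Fin.ext_iff]⟩
      · exact ⟨⟨0, by omega⟩, Ne.symm h⟩
    set s : ZMod d := symp x y with hs
    set w : PS d n := (fun k => if k = j then 1 else 0, 0) with hw
    set w' : PS d n := (0, fun k => if k = j then -s else 0) with hw'
    have hwj : onMode j w := by
      intro k hk
      constructor <;> simp [hw, hk]
    have hw'j : onMode j w' := by
      intro k hk
      constructor <;> simp [hw', hk]
    have hww' : symp w w' = -s := by
      unfold symp ip
      simp [hw, hw']
    have hxw : symp x w = 0 := symp_onMode_eq_zero hj.symm hx hwj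
    have hxw' : symp x w' = 0 := symp_onMode_eq_zero hj.symm hx hw'j
    have hyw : symp y w = 0 := symp_onMode_eq_zero hj.symm hy hwj
    have hyw' : symp y w' = 0 := symp_onMode_eq_zero hj.symm hy hw'j
    have E1 := key x y w w' hxw hxw' hyw hyw' (by rw [hww']; ring)
    have E2 := key w w' (-x) (-y)
      (by rw [symp_neg_right, symp_anti, hxw, neg_zero, neg_zero])
      (by rw [symp_neg_right, symp_anti, hyw, neg_zero, neg_zero])
      (by rw [symp_neg_right, symp_anti, hxw', neg_zero, neg_zero])
      (by rw [symp_neg_right, symp_anti, hyw', neg_zero, neg_zero])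
      (by rw [hww', symp_neg_left, symp_neg_right, neg_neg, ← hs]; ring)
    have e : (-x) + (-y) = -(x + y) := by abel
    rw [e, lamneg (x + y), lamneg x, lamneg y] at E2
    have h2e : (2 : ZMod d) * lam (x + y) = 2 * (lam x + lam y) := by
      linear_combination E1 - E2
    exact h2.mul_left_cancel h2e
  -- additivity over mode decompositions
  have sumlam : ∀ (g : Fin n → PS d n), (∀ i, onMode i (g i)) →
      lam (∑ i, g i) = ∑ i, lam (g i) := by
    intro g hg
    induction (Finset.univ : Finset (Fin n)) using Finset.induction with
    | empty => simp [lam0]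
    | @insert a t hns ih =>
        rw [Finset.sum_insert hns, Finset.sum_insert hns, ← ih,
          hadd _ _ (by
            rw [symp_sum_right]
            refine Finset.sum_eq_zero (fun i hi => ?_)
            exact symp_onMode_eq_zero
              (fun hc => hns (by rw [hc]; exact hi)) (hg _) (hg _))]
  intro u v
  have hu : lam u = ∑ i, lam (mpart i u) := by
    conv_lhs => rw [← sum_mpart u]
    exact sumlam _ (fun i => mpart_onMode i u)
  have hv : lam v = ∑ i, lam (mpart i v) := by
    conv_lhs => rw [← sum_mpart v]
    exact sumlam _ (fun i => mpart_onMode i v)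
  have huv : lam (u + v) = ∑ i, lam (mpart i (u + v)) := by
    conv_lhs => rw [← sum_mpart (u + v)]
    exact sumlam _ (fun i => mpart_onMode i (u + v))
  rw [huv, hu, hv, ← Finset.sum_add_distrib]
  refine Finset.sum_congr rfl (fun i _ => ?_)
  rw [mpart_add]
  exact single i (mpart i u) (mpart i v) (mpart_onMode i u) (mpart_onMode i v)
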